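/- Recursive influence bound: Let P and Q be n×n row-stochastic matrices. Define, for a subset B ⊆ {1,…,n}, the influence Φ_P(s) = max over subsets B of size s of Σ_{i=1}^n Σ_{j∈B} P_{ij} (with Φ_P(0) = 0). Then for every δ > 0 and every s ∈ {0,…,n}, Φ_{PQ}(s) ≤ Φ_P(⌊δ·Φ_Q(s)⌋) + n/δ, where Φ_P is extended to nonnegative reals by Φ_P(x) = Φ_P(min(⌊x⌋, n)). -/

import Mathlib

open Finset

/-- `Φ_P(s)`: the maximum total one-time influence of a set of `s` nodes,
i.e. the maximum over subsets `B` of cardinality `s` of `∑ i, ∑ j ∈ B, P i j`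
(for `s = 0` the only such set is `∅`, giving `0`). -/
noncomputable def Phi {n : ℕ} (P : Matrix (Fin n) (Fin n) ℝ) (s : ℕ) : ℝ :=
  sSup ((fun B : Finset (Fin n) => ∑ i, ∑ j ∈ B, P i j) ''
    {B : Finset (Fin n) | B.card = s})

/-- Extension of `Φ_P` to nonnegative real arguments: `Φ_P(x) = Φ_P(min ⌊x⌋ n)`. -/
noncomputable def PhiR {n : ℕ} (P : Matrix (Fin n) (Fin n) ℝ) (x : ℝ) : ℝ :=
  Phi P (min ⌊x⌋₊ n)

lemma phi_bddAbove {n : ℕ} (P : Matrix (Fin n) (Fin n) ℝ) (s : ℕ) :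
    BddAbove ((fun B : Finset (Fin n) => ∑ i, ∑ j ∈ B, P i j) ''
      {B : Finset (Fin n) | B.card = s}) :=
  (Set.toFinite _).image _ |>.bddAbove

lemma le_phi {n : ℕ} (P : Matrix (Fin n) (Fin n) ℝ) {s : ℕ} {B : Finset (Fin n)}
    (h : B.card = s) : ∑ i, ∑ j ∈ B, P i j ≤ Phi P s :=
  le_csSup (phi_bddAbove P s) ⟨B, h, rfl⟩

lemma phi_le {n : ℕ} (P : Matrix (Fin n) (Fin n) ℝ) {s : ℕ} (hs : s ≤ n) {c : ℝ}
    (h : ∀ B : Finset (Fin n), B.card = s → ∑ i, ∑ j ∈ B, P i j ≤ c) :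
    Phi P s ≤ c := by
  obtain ⟨B, -, hB⟩ := Finset.exists_subset_card_eq (s := (Finset.univ : Finset (Fin n))) (n := s)
    (by simpa using hs)
  exact csSup_le ⟨_, ⟨B, hB, rfl⟩⟩ (by rintro x ⟨C, hC, rfl⟩; exact h C hC)

lemma phi_mono {n : ℕ} (P : Matrix (Fin n) (Fin n) ℝ) (hP : ∀ i j, 0 ≤ P i j)
    {a b : ℕ} (hab : a ≤ b) (hb : b ≤ n) : Phi P a ≤ Phi P b := by
  apply phi_le P (hab.trans hb)
  intro B hB
  obtain ⟨C, hBC, -, hC⟩ := Finset.exists_subsuperset_card_eq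
    (Finset.subset_univ B) (hB ▸ hab) (by simpa using hb)
  calc ∑ i, ∑ j ∈ B, P i j
      ≤ ∑ i, ∑ j ∈ C, P i j := Finset.sum_le_sum fun i _ =>
        Finset.sum_le_sum_of_subset_of_nonneg hBC (fun j _ _ => hP i j)
    _ ≤ Phi P b := le_phi P hC

/-- Recursive influence bound: for row-stochastic `P, Q`, every `δ > 0` and
`s ∈ {0,…,n}`, `Φ_{PQ}(s) ≤ Φ_P(δ·Φ_Q(s)) + n/δ`. -/
theorem recursive_influence_bound (n : ℕ) (P Q : Matrix (Fin n) (Fin n) ℝ)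
    (hP_nonneg : ∀ i j, 0 ≤ P i j) (hP_row : ∀ i, ∑ j, P i j = 1)
    (hQ_nonneg : ∀ i j, 0 ≤ Q i j) (hQ_row : ∀ i, ∑ j, Q i j = 1)
    (δ : ℝ) (hδ : 0 < δ) (s : ℕ) (hs : s ≤ n) :
    Phi (P * Q) s ≤ PhiR P (δ * Phi Q s) + n / δ := by
  classical
  apply phi_le _ hs
  intro B hB
  set c : Fin n → ℝ := fun k => ∑ j ∈ B, Q k j with hc
  have hc_nonneg : ∀ k, 0 ≤ c k := fun k =>
    Finset.sum_nonneg fun j _ => hQ_nonneg k j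
  have hc_le_one : ∀ k, c k ≤ 1 := fun k => by
    rw [← hQ_row k]
    exact Finset.sum_le_sum_of_subset_of_nonneg (Finset.subset_univ B)
      (fun j _ _ => hQ_nonneg k j)
  have hc_sum : ∑ k, c k ≤ Phi Q s := le_phi Q hB
  set A : Finset (Fin n) := Finset.univ.filter (fun k => 1/δ ≤ c k) with hA
  -- card bound
  have hAcard : (A.card : ℝ) ≤ δ * Phi Q s := by
    have h1 : (A.card : ℝ) * (1/δ) ≤ ∑ k ∈ A, c k := by
      calc (A.card : ℝ) * (1/δ) = ∑ _k ∈ A, (1/δ) := by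
            rw [Finset.sum_const, nsmul_eq_mul]
        _ ≤ ∑ k ∈ A, c k := Finset.sum_le_sum fun k hk => by
            simpa using (Finset.mem_filter.mp hk).2
    have h2 : ∑ k ∈ A, c k ≤ ∑ k, c k :=
      Finset.sum_le_sum_of_subset_of_nonneg (Finset.subset_univ A)
        (fun k _ _ => hc_nonneg k)
    have := (h1.trans h2).trans hc_sum
    rw [mul_one_div, div_le_iff₀ hδ] at this
    linarith [this]
  have hA_le : A.card ≤ min ⌊δ * Phi Q s⌋₊ n := by
    refine le_min (Nat.le_floor hAcard) ?_
    simpa using Finset.card_le_card (Finset.subset_univ A)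
  -- rewrite the sum
  have hsum : ∑ i, ∑ j ∈ B, (P * Q) i j = ∑ i, ∑ k, P i k * c k := by
    refine Finset.sum_congr rfl fun i _ => ?_
    simp only [Matrix.mul_apply]
    rw [Finset.sum_comm]
    simp [hc, Finset.mul_sum]
  rw [hsum]
  have split : ∀ i, ∑ k, P i k * c k = ∑ k ∈ A, P i k * c k + ∑ k ∈ Aᶜ, P i k * c k :=
    fun i => (Finset.sum_add_sum_compl A _).symm
  calc ∑ i, ∑ k, P i k * c k
      = ∑ i, ∑ k ∈ A, P i k * c k + ∑ i, ∑ k ∈ Aᶜ, P i k * c k := by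
        rw [← Finset.sum_add_distrib]; exact Finset.sum_congr rfl fun i _ => split i
    _ ≤ PhiR P (δ * Phi Q s) + n / δ := by
        gcongr ?_ + ?_
        · calc ∑ i, ∑ k ∈ A, P i k * c k
              ≤ ∑ i, ∑ k ∈ A, P i k := by
                refine Finset.sum_le_sum fun i _ => Finset.sum_le_sum fun k _ => ?_
                nlinarith [hP_nonneg i k, hc_le_one k]
            _ ≤ Phi P A.card := le_phi P rfl
            _ ≤ Phi P (min ⌊δ * Phi Q s⌋₊ n) :=
                phi_mono P hP_nonneg hA_le (min_le_right _ _)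
            _ = PhiR P (δ * Phi Q s) := rfl
        · calc ∑ i, ∑ k ∈ Aᶜ, P i k * c k
              ≤ ∑ i, ∑ k ∈ Aᶜ, P i k * (1/δ) := by
                refine Finset.sum_le_sum fun i _ => Finset.sum_le_sum fun k hk => ?_
                have : ¬ (1/δ ≤ c k) := by
                  simpa [hA] using Finset.mem_compl.mp hk
                exact mul_le_mul_of_nonneg_left (le_of_not_ge this) (hP_nonneg i k)
            _ ≤ n / δ := by
                have : ∑ i, ∑ k ∈ Aᶜ, P i k * (1/δ)
                    = (∑ i, ∑ k ∈ Aᶜ, P i k) * (1/δ) := by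
                  rw [Finset.sum_mul]
                  exact Finset.sum_congr rfl fun i _ => (Finset.sum_mul _ _ _).symm
                have h3 : ∑ i, ∑ k ∈ Aᶜ, P i k ≤ (n : ℝ) := by
                  calc ∑ i, ∑ k ∈ Aᶜ, P i k
                      ≤ ∑ i : Fin n, ∑ k, P i k := Finset.sum_le_sum fun i _ =>
                        Finset.sum_le_sum_of_subset_of_nonneg (Finset.subset_univ _)
                          (fun k _ _ => hP_nonneg i k)
                    _ = n := by simp [hP_row]
                rw [this, div_eq_mul_one_div (n:ℝ) δ]
                exact mul_le_mul_of_nonneg_right h3 (by positivity)
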